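/- Let n ≥ 1 and let Ē be an n-periodic set of edges on ℤ, each of length at most 2n. Then Ē contains a 3-crossing if and only if φ(Ē) = {{a mod 4n, b mod 4n} : [a,b] ∈ Ē} contains a 3-crossing on the 4n-gon. Equivalently, Ē is 3-crossing-free if and only if φ(Ē) is 3-crossing-free. -/

import Mathlib

/- Edges on the universal cover of the half-cylinder, modeled by the integers.
   An edge is an unordered pair of distinct integers, represented as an ordered
   pair `(a, b)` with `a < b` (validity). -/

namespace Multitriangulation

abbrev Edge := ℤ × ℤ

/-- Translate an edge by `t`: `[a,b] + t = [a+t, b+t]`. -/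
def shift (e : Edge) (t : ℤ) : Edge := (e.1 + t, e.2 + t)

/-- Two edges (as unordered pairs of integers) cross:
their endpoints strictly interleave. -/
def Crosses (e f : Edge) : Prop :=
  (min e.1 e.2 < min f.1 f.2 ∧ min f.1 f.2 < max e.1 e.2 ∧ max e.1 e.2 < max f.1 f.2) ∨
  (min f.1 f.2 < min e.1 e.2 ∧ min e.1 e.2 < max f.1 f.2 ∧ max f.1 f.2 < max e.1 e.2)

/-- A finite set of edges is an `l`-crossing if it consists of `l` pairwise
crossing edges. -/
def IsCrossing (l : ℕ) (S : Finset Edge) : Prop :=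
  S.card = l ∧ ∀ e ∈ S, ∀ f ∈ S, e ≠ f → Crosses e f

/-- A set of edges is `l`-crossing-free if no `l` of its edges pairwise cross. -/
def CrossingFree (l : ℕ) (E : Set Edge) : Prop :=
  ¬ ∃ S : Finset Edge, ↑S ⊆ E ∧ IsCrossing l S

/-- A set of edges is `n`-periodic if `e ∈ E ↔ e + n ∈ E`. -/
def Periodic (n : ℕ) (E : Set Edge) : Prop := ∀ e, e ∈ E ↔ shift e (n : ℤ) ∈ E

/-- All members are genuine edges `[a,b]` with `a < b`. -/
def ValidEdges (E : Set Edge) : Prop := ∀ e ∈ E, e.1 < e.2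

/-- An `n`-periodic `k`-triangulation on `ℤ`: an `n`-periodic
`(k+1)`-crossing-free set of edges that is maximal under inclusion among
`n`-periodic `(k+1)`-crossing-free sets of edges. -/
def IsTriangulation (n k : ℕ) (T : Set Edge) : Prop :=
  ValidEdges T ∧ Periodic n T ∧ CrossingFree (k+1) T ∧
  ∀ T', ValidEdges T' → Periodic n T' → CrossingFree (k+1) T' → T ⊆ T' → T' = T

/-- Interleaving of representatives `0 ≤ a < b < m`, `0 ≤ c < d < m`:
`a<c<b<d` or `c<a<d<b` (formulated symmetrically via `min`/`max`). -/
def crossIndex (a b c d : ℕ) : Prop :=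
  (min a b < min c d ∧ min c d < max a b ∧ max a b < max c d) ∨
  (min c d < min a b ∧ min a b < max c d ∧ max c d < max a b)

/-- Two edges of the `m`-gon (vertices labeled by `ZMod m`) cross: their
endpoints interleave in cyclic order, via the representatives in `[0, m)`. -/
def PolyCrosses {m : ℕ} (e f : Sym2 (ZMod m)) : Prop :=
  ∃ x y z w : ZMod m, e = s(x, y) ∧ f = s(z, w) ∧ crossIndex x.val y.val z.val w.val

/-- A finite set of polygon edges is an `l`-crossing if it consists of `l`
pairwise crossing edges. -/
def PolyIsCrossing {m : ℕ} (l : ℕ) (S : Finset (Sym2 (ZMod m))) : Prop :=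
  S.card = l ∧ ∀ e ∈ S, ∀ f ∈ S, e ≠ f → PolyCrosses e f

/-- A set of polygon edges is `l`-crossing-free. -/
def PolyCrossingFree {m : ℕ} (l : ℕ) (E : Set (Sym2 (ZMod m))) : Prop :=
  ¬ ∃ S : Finset (Sym2 (ZMod m)), ↑S ⊆ E ∧ PolyIsCrossing l S

/-- Invariance under the rotation `v ↦ v + n`. -/
def PolyPeriodic (n : ℕ) {m : ℕ} (T : Set (Sym2 (ZMod m))) : Prop :=
  ∀ e, e ∈ T ↔ Sym2.map (· + (n : ZMod m)) e ∈ T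

/-- All members are genuine edges (pairs of distinct vertices). -/
def PolyValid {m : ℕ} (T : Set (Sym2 (ZMod m))) : Prop := ∀ e ∈ T, ¬ e.IsDiag

/-- A `2`-triangulation on the `m`-gon: a 3-crossing-free set of edges,
maximal under inclusion among 3-crossing-free sets of edges. -/
def IsPolyTriangulation {m : ℕ} (T : Set (Sym2 (ZMod m))) : Prop :=
  PolyValid T ∧ PolyCrossingFree 3 T ∧
  ∀ T', PolyValid T' → PolyCrossingFree 3 T' → T ⊆ T' → T' = T

/-- The projection `φ` sending an edge set on `ℤ` to an edge set on the
`4n`-gon: `[a,b] ↦ {a mod 4n, b mod 4n}`. -/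
def phi (n : ℕ) (E : Set Edge) : Set (Sym2 (ZMod (4 * n))) :=
  {x | ∃ e ∈ E, x = s(((e.1 : ZMod (4 * n))), ((e.2 : ZMod (4 * n))))}


/-! ### Auxiliary lemmas -/

lemma crosses_symm {e f : Edge} (h : Crosses e f) : Crosses f e := by
  unfold Crosses at *; tauto

lemma crosses_ne {e f : Edge} (h : Crosses e f) : e ≠ f := by
  rintro rfl; unfold Crosses at h; omega

lemma crosses_mk {a b c d : ℤ}
    (h : (a < c ∧ c < b ∧ b < d) ∨ (c < a ∧ a < d ∧ d < b)) :
    Crosses (a, b) (c, d) := by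
  unfold Crosses; dsimp only; omega

lemma orbit_mem {n : ℕ} {E : Set Edge} (hper : Periodic n E) {e : Edge} (he : e ∈ E)
    (d : ℤ) (hd : (n : ℤ) ∣ d) : shift e d ∈ E := by
  obtain ⟨t, rfl⟩ := hd
  induction t using Int.induction_on with
  | zero => simpa [shift] using he
  | succ k ih =>
      have h2 := (hper _).mp ih
      have h3 : shift (shift e ((n:ℤ) * k)) (n:ℤ) = shift e ((n:ℤ) * (k+1)) := by
        simp [shift]; constructor <;> ring
      rwa [h3] at h2
  | pred k ih =>
      have h2 : shift (shift e ((n:ℤ) * (-k - 1))) (n:ℤ) = shift e ((n:ℤ) * (-k)) := by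
        simp [shift]; constructor <;> ring
      exact (hper _).mpr (by rwa [h2])

lemma dvd_bounded {m d : ℤ} (hm : 0 < m) (h : m ∣ d) (h2 : -m < d) (h3 : d < m) : d = 0 := by
  obtain ⟨k, rfl⟩ := h
  rcases lt_trichotomy k 0 with hk | hk | hk
  · have : m * k ≤ m * (-1) := mul_le_mul_of_nonneg_left (by omega) hm.le
    linarith
  · simp [hk]
  · have : m * 1 ≤ m * k := mul_le_mul_of_nonneg_left (by omega) hm.le
    linarith

lemma polyCrosses_symm {m : ℕ} {e f : Sym2 (ZMod m)} (h : PolyCrosses e f) :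
    PolyCrosses f e := by
  obtain ⟨x, y, z, w, h1, h2, hc⟩ := h
  exact ⟨z, w, x, y, h2, h1, by unfold crossIndex at *; tauto⟩

lemma polyCrosses_elim {m : ℕ} {a b c d : ZMod m}
    (h : PolyCrosses s(a, b) s(c, d)) : crossIndex a.val b.val c.val d.val := by
  obtain ⟨x, y, z, w, h1, h2, hc⟩ := h
  rw [Sym2.eq_iff] at h1 h2
  rcases h1 with ⟨rfl, rfl⟩ | ⟨rfl, rfl⟩ <;> rcases h2 with ⟨rfl, rfl⟩ | ⟨rfl, rfl⟩ <;>
    (unfold crossIndex at hc ⊢; omega)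

lemma val_intCast_facts (n : ℕ) (hn : 1 ≤ n) (x : ℤ) :
    0 ≤ (((x : ZMod (4*n)).val : ℤ)) ∧ (((x : ZMod (4*n)).val : ℤ)) < 4*n ∧
    (4*(n:ℤ)) ∣ x - ((x : ZMod (4*n)).val : ℤ) := by
  haveI : NeZero (4*n) := ⟨by omega⟩
  have h := ZMod.val_intCast (n := 4*n) x
  push_cast at h
  refine ⟨by positivity, ?_, ?_⟩
  · rw [h]; have := Int.emod_lt_of_pos x (b := 4*(n:ℤ)) (by positivity); omega
  · rw [h]; exact ⟨x / (4*n), by rw [Int.emod_def]; ring⟩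

lemma castZMod_eq_imp (n : ℕ) (hn : 1 ≤ n) {x y : ℤ}
    (h : (x : ZMod (4*n)) = (y : ZMod (4*n))) : (4*(n:ℤ)) ∣ y - x := by
  haveI : NeZero (4*n) := ⟨by omega⟩
  rw [ZMod.intCast_eq_intCast_iff] at h
  have h2 := h.dvd
  push_cast at h2
  exact h2

lemma val_window {n : ℕ} (hn : 1 ≤ n) {x : ℤ} (h0 : 0 ≤ x) (h1 : x < 8*n) :
    ((x : ZMod (4*n)).val : ℤ) = x ∨ ((x : ZMod (4*n)).val : ℤ) = x - 4*n := by
  obtain ⟨hv0, hv1, hdvd⟩ := val_intCast_facts n hn x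
  set w : ℤ := ((x : ZMod (4*n)).val : ℤ) with hw
  have hpos : (0:ℤ) < 4*n := by positivity
  rcases lt_or_ge x (4*(n:ℤ)) with hx | hx
  · left; have := dvd_bounded hpos hdvd (by omega) (by omega); omega
  · right
    have hdvd2 : (4*(n:ℤ)) ∣ (x - w) - 4*n := by
      obtain ⟨k, hk⟩ := hdvd; exact ⟨k - 1, by rw [mul_sub]; omega⟩
    have := dvd_bounded hpos hdvd2 (by omega) (by omega); omega

lemma polyCross_pair (n : ℕ) (hn : 1 ≤ n) (Ai Bi Aj Bj : ℤ)
    (h0 : 0 ≤ Ai) (h1 : Ai < Aj) (h2 : Aj < Bi) (h3 : Bi < Bj)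
    (h4 : Aj < 4*n) (h5 : Bj < Ai + 4*n) :
    PolyCrosses (s((Ai : ZMod (4*n)), (Bi : ZMod (4*n))))
      (s((Aj : ZMod (4*n)), (Bj : ZMod (4*n)))) := by
  refine ⟨_, _, _, _, rfl, rfl, ?_⟩
  have vAi := val_window hn h0 (by omega)
  have vAj := val_window hn (x := Aj) (by omega) (by omega)
  have vBi := val_window hn (x := Bi) (by omega) (by omega)
  have vBj := val_window hn (x := Bj) (by omega) (by omega)
  have bAi := (val_intCast_facts n hn Ai).2.1
  have bAj := (val_intCast_facts n hn Aj).2.1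
  have bBi := (val_intCast_facts n hn Bi).2.1
  have bBj := (val_intCast_facts n hn Bj).2.1
  unfold crossIndex
  rcases vAi with h6 | h6 <;> rcases vAj with h7 | h7 <;>
    rcases vBi with h8 | h8 <;> rcases vBj with h9 | h9 <;> omega

lemma exists_crossing_of_three {E : Set Edge} {f1 f2 f3 : Edge}
    (h1 : f1 ∈ E) (h2 : f2 ∈ E) (h3 : f3 ∈ E)
    (c12 : Crosses f1 f2) (c13 : Crosses f1 f3) (c23 : Crosses f2 f3) :
    ∃ S : Finset Edge, ↑S ⊆ E ∧ IsCrossing 3 S := by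
  have n12 := crosses_ne c12
  have n13 := crosses_ne c13
  have n23 := crosses_ne c23
  refine ⟨{f1, f2, f3}, ?_, ?_, ?_⟩
  · intro x hx
    simp only [Finset.coe_insert, Finset.coe_singleton, Set.mem_insert_iff,
      Set.mem_singleton_iff] at hx
    rcases hx with rfl | rfl | rfl <;> assumption
  · rw [Finset.card_insert_of_notMem (by simp [n12, n13]),
      Finset.card_insert_of_notMem (by simp [n23]), Finset.card_singleton]
  · intro e he f hf hne
    simp only [Finset.mem_insert, Finset.mem_singleton] at he hf
    rcases he with rfl | rfl | rfl <;> rcases hf with rfl | rfl | rfl <;>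
      first
        | exact absurd rfl hne
        | assumption
        | exact crosses_symm (by assumption)

lemma exists_polycrossing_of_three {m : ℕ} {F : Set (Sym2 (ZMod m))}
    {p1 p2 p3 : Sym2 (ZMod m)}
    (h1 : p1 ∈ F) (h2 : p2 ∈ F) (h3 : p3 ∈ F)
    (n12 : p1 ≠ p2) (n13 : p1 ≠ p3) (n23 : p2 ≠ p3)
    (c12 : PolyCrosses p1 p2) (c13 : PolyCrosses p1 p3) (c23 : PolyCrosses p2 p3) :
    ∃ S : Finset (Sym2 (ZMod m)), ↑S ⊆ F ∧ PolyIsCrossing 3 S := by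
  refine ⟨{p1, p2, p3}, ?_, ?_, ?_⟩
  · intro x hx
    simp only [Finset.coe_insert, Finset.coe_singleton, Set.mem_insert_iff,
      Set.mem_singleton_iff] at hx
    rcases hx with rfl | rfl | rfl <;> assumption
  · rw [Finset.card_insert_of_notMem (by simp [n12, n13]),
      Finset.card_insert_of_notMem (by simp [n23]), Finset.card_singleton]
  · intro e he f hf hne
    simp only [Finset.mem_insert, Finset.mem_singleton] at he hf
    rcases he with rfl | rfl | rfl <;> rcases hf with rfl | rfl | rfl <;>
      first
        | exact absurd rfl hne
        | assumption
        | exact polyCrosses_symm (by assumption)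

/-- Forward core: three integer edges with sorted interleaved endpoints,
close to the origin, project to a 3-crossing of the `4n`-gon. -/
lemma fcore (n : ℕ) (hn : 1 ≤ n) (E : Set Edge) (hper : Periodic n E)
    (e1 e2 e3 : Edge) (m1 : e1 ∈ E) (m2 : e2 ∈ E) (m3 : e3 ∈ E)
    (h12 : e1.1 < e2.1) (h23 : e2.1 < e3.1) (h31 : e3.1 < e1.2)
    (h1b : e1.2 < e2.2) (h2b : e2.2 < e3.2)
    (hl1 : e1.2 - e1.1 ≤ 2*(n:ℤ)) (hl3 : e3.2 - e3.1 ≤ 2*(n:ℤ)) :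
    ∃ S : Finset (Sym2 (ZMod (4*n))), ↑S ⊆ phi n E ∧ PolyIsCrossing 3 S := by
  have hn' : (1:ℤ) ≤ (n:ℤ) := by exact_mod_cast hn
  set d : ℤ := e1.1 % n - e1.1 with hd
  have hdvd : (n:ℤ) ∣ d := ⟨-(e1.1 / n), by rw [hd, Int.emod_def]; ring⟩
  have hA1 : 0 ≤ e1.1 + d ∧ e1.1 + d < n := by
    have q1 := Int.emod_nonneg e1.1 (show (n:ℤ) ≠ 0 by omega)
    have q2 := Int.emod_lt_of_pos e1.1 (show (0:ℤ) < n by omega)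
    omega
  have g1 : ((e1.1 + d, e1.2 + d) : Edge) ∈ E := orbit_mem hper m1 d hdvd
  have g2 : ((e2.1 + d, e2.2 + d) : Edge) ∈ E := orbit_mem hper m2 d hdvd
  have g3 : ((e3.1 + d, e3.2 + d) : Edge) ∈ E := orbit_mem hper m3 d hdvd
  have hpos : (0:ℤ) < 4*n := by positivity
  have key : ∀ x y : ℤ, e1.1 + d ≤ x → x < y → y < e1.2 + d + 2*n →
      ((x : ZMod (4*n)) : ZMod (4*n)) ≠ (y : ZMod (4*n)) := by
    intro x y hx hxy hy h
    have h2 := castZMod_eq_imp n hn h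
    have h3 := dvd_bounded hpos h2 (by omega) (by omega)
    omega
  refine exists_polycrossing_of_three
    (p1 := s(((e1.1 + d : ℤ) : ZMod (4*n)), ((e1.2 + d : ℤ) : ZMod (4*n))))
    (p2 := s(((e2.1 + d : ℤ) : ZMod (4*n)), ((e2.2 + d : ℤ) : ZMod (4*n))))
    (p3 := s(((e3.1 + d : ℤ) : ZMod (4*n)), ((e3.2 + d : ℤ) : ZMod (4*n))))
    ⟨_, g1, rfl⟩ ⟨_, g2, rfl⟩ ⟨_, g3, rfl⟩ ?_ ?_ ?_ ?_ ?_ ?_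
  · intro h
    rw [Sym2.eq_iff] at h
    rcases h with ⟨ha, hb⟩ | ⟨ha, hb⟩
    · exact key _ _ (by omega) (by omega) (by omega) ha
    · exact key _ _ (by omega) (by omega) (by omega) ha
  · intro h
    rw [Sym2.eq_iff] at h
    rcases h with ⟨ha, hb⟩ | ⟨ha, hb⟩
    · exact key _ _ (by omega) (by omega) (by omega) ha
    · exact key _ _ (by omega) (by omega) (by omega) ha
  · intro h
    rw [Sym2.eq_iff] at h
    rcases h with ⟨ha, hb⟩ | ⟨ha, hb⟩
    · exact key _ _ (by omega) (by omega) (by omega) ha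
    · exact key _ _ (by omega) (by omega) (by omega) ha
  · exact polyCross_pair n hn _ _ _ _ (by omega) (by omega) (by omega) (by omega)
      (by omega) (by omega)
  · exact polyCross_pair n hn _ _ _ _ (by omega) (by omega) (by omega) (by omega)
      (by omega) (by omega)
  · exact polyCross_pair n hn _ _ _ _ (by omega) (by omega) (by omega) (by omega)
      (by omega) (by omega)

/-- Backward core: three pairwise crossing chords of the `4n`-gon, whose
standard lifts (short or wrapped) have all their `n ℤ`-translates in `E`,
yield a 3-crossing in `E`. -/
lemma bcore (n : ℕ) (hn : 1 ≤ n) (E : Set Edge) (X1 Y1 X2 Y2 X3 Y3 : ℤ)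
    (hc1 : ∀ d : ℤ, (n:ℤ) ∣ d →
      shift (if Y1 - X1 ≤ 2*(n:ℤ) then ((X1, Y1) : Edge) else (Y1 - 4*(n:ℤ), X1)) d ∈ E)
    (hc2 : ∀ d : ℤ, (n:ℤ) ∣ d →
      shift (if Y2 - X2 ≤ 2*(n:ℤ) then ((X2, Y2) : Edge) else (Y2 - 4*(n:ℤ), X2)) d ∈ E)
    (hc3 : ∀ d : ℤ, (n:ℤ) ∣ d →
      shift (if Y3 - X3 ≤ 2*(n:ℤ) then ((X3, Y3) : Edge) else (Y3 - 4*(n:ℤ), X3)) d ∈ E)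
    (h1 : 0 ≤ X1) (h2 : X1 < X2) (h3 : X2 < X3) (h4 : X3 < Y1)
    (h5 : Y1 < Y2) (h6 : Y2 < Y3) (h7 : Y3 < 4*(n:ℤ)) :
    ∃ S : Finset Edge, ↑S ⊆ E ∧ IsCrossing 3 S := by
  have hn' : (1:ℤ) ≤ (n:ℤ) := by exact_mod_cast hn
  by_cases w1 : Y1 - X1 ≤ 2*(n:ℤ) <;> by_cases w2 : Y2 - X2 ≤ 2*(n:ℤ) <;>
    by_cases w3 : Y3 - X3 ≤ 2*(n:ℤ)
  · -- SSS
    rw [if_pos w1] at hc1; rw [if_pos w2] at hc2; rw [if_pos w3] at hc3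
    exact exists_crossing_of_three (hc1 0 ⟨0, by ring⟩) (hc2 0 ⟨0, by ring⟩)
      (hc3 0 ⟨0, by ring⟩) (crosses_mk (by omega)) (crosses_mk (by omega))
      (crosses_mk (by omega))
  · -- SSW
    rw [if_pos w1] at hc1; rw [if_pos w2] at hc2; rw [if_neg w3] at hc3
    exact exists_crossing_of_three (hc1 0 ⟨0, by ring⟩) (hc2 0 ⟨0, by ring⟩)
      (hc3 0 ⟨0, by ring⟩) (crosses_mk (by omega)) (crosses_mk (by omega))
      (crosses_mk (by omega))
  · -- SWS : shift the middle wrapped edge by 2n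
    rw [if_pos w1] at hc1; rw [if_neg w2] at hc2; rw [if_pos w3] at hc3
    exact exists_crossing_of_three (hc1 0 ⟨0, by ring⟩) (hc2 (2*n) ⟨2, by ring⟩)
      (hc3 0 ⟨0, by ring⟩) (crosses_mk (by omega)) (crosses_mk (by omega))
      (crosses_mk (by omega))
  · -- SWW
    rw [if_pos w1] at hc1; rw [if_neg w2] at hc2; rw [if_neg w3] at hc3
    exact exists_crossing_of_three (hc1 0 ⟨0, by ring⟩) (hc2 0 ⟨0, by ring⟩)
      (hc3 0 ⟨0, by ring⟩) (crosses_mk (by omega)) (crosses_mk (by omega))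
      (crosses_mk (by omega))
  · -- WSS : shift the first wrapped edge by 4n
    rw [if_neg w1] at hc1; rw [if_pos w2] at hc2; rw [if_pos w3] at hc3
    exact exists_crossing_of_three (hc1 (4*n) ⟨4, by ring⟩) (hc2 0 ⟨0, by ring⟩)
      (hc3 0 ⟨0, by ring⟩) (crosses_mk (by omega)) (crosses_mk (by omega))
      (crosses_mk (by omega))
  · -- WSW : shift the first wrapped edge by 2n
    rw [if_neg w1] at hc1; rw [if_pos w2] at hc2; rw [if_neg w3] at hc3
    exact exists_crossing_of_three (hc1 (2*n) ⟨2, by ring⟩) (hc2 0 ⟨0, by ring⟩)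
      (hc3 0 ⟨0, by ring⟩) (crosses_mk (by omega)) (crosses_mk (by omega))
      (crosses_mk (by omega))
  · -- WWS : shift the two wrapped edges by 4n
    rw [if_neg w1] at hc1; rw [if_neg w2] at hc2; rw [if_pos w3] at hc3
    exact exists_crossing_of_three (hc1 (4*n) ⟨4, by ring⟩) (hc2 (4*n) ⟨4, by ring⟩)
      (hc3 0 ⟨0, by ring⟩) (crosses_mk (by omega)) (crosses_mk (by omega))
      (crosses_mk (by omega))
  · -- WWW
    rw [if_neg w1] at hc1; rw [if_neg w2] at hc2; rw [if_neg w3] at hc3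
    exact exists_crossing_of_three (hc1 0 ⟨0, by ring⟩) (hc2 0 ⟨0, by ring⟩)
      (hc3 0 ⟨0, by ring⟩) (crosses_mk (by omega)) (crosses_mk (by omega))
      (crosses_mk (by omega))

/-- Backward lift: each chord of `φ(Ē)` has a canonical lift in `Ē`. -/
lemma lift_base (n : ℕ) (hn : 1 ≤ n) {E : Set Edge} (hper : Periodic n E)
    {e : Edge} (he : e ∈ E) (hv : e.1 < e.2) (hl : e.2 - e.1 ≤ 2*(n:ℤ)) :
    (if max ((e.1 : ZMod (4*n)).val : ℤ) ((e.2 : ZMod (4*n)).val : ℤ) -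
          min ((e.1 : ZMod (4*n)).val : ℤ) ((e.2 : ZMod (4*n)).val : ℤ) ≤ 2*(n:ℤ)
      then ((min ((e.1 : ZMod (4*n)).val : ℤ) ((e.2 : ZMod (4*n)).val : ℤ),
             max ((e.1 : ZMod (4*n)).val : ℤ) ((e.2 : ZMod (4*n)).val : ℤ)) : Edge)
      else (max ((e.1 : ZMod (4*n)).val : ℤ) ((e.2 : ZMod (4*n)).val : ℤ) - 4*(n:ℤ),
            min ((e.1 : ZMod (4*n)).val : ℤ) ((e.2 : ZMod (4*n)).val : ℤ))) ∈ E := by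
  have hn' : (1:ℤ) ≤ (n:ℤ) := by exact_mod_cast hn
  obtain ⟨hU0, hU1, hUd⟩ := val_intCast_facts n hn e.1
  obtain ⟨hV0, hV1, hVd⟩ := val_intCast_facts n hn e.2
  set U : ℤ := ((e.1 : ZMod (4*n)).val : ℤ) with hU
  set V : ℤ := ((e.2 : ZMod (4*n)).val : ℤ) with hV
  have hpos : (0:ℤ) < 4*n := by positivity
  obtain ⟨k1, hk1⟩ := hUd
  obtain ⟨k2, hk2⟩ := hVd
  have hdvd : (4*(n:ℤ)) ∣ (V - U) - (e.2 - e.1) := ⟨k1 - k2, by rw [mul_sub]; omega⟩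
  rcases le_or_gt U V with hUV | hUV
  · -- short orientation: V - U = length
    have h0 : (V - U) - (e.2 - e.1) = 0 := dvd_bounded hpos hdvd (by omega) (by omega)
    rw [if_pos (by omega)]
    have heq : ((min U V, max U V) : Edge) = shift e (U - e.1) := by
      unfold shift; rw [Prod.mk.injEq]; constructor <;> omega
    rw [heq]
    exact orbit_mem hper he _ ⟨-(4*k1), by linear_combination -hk1⟩
  · -- reversed orientation: U - V = 4n - length
    have hdvd2 : (4*(n:ℤ)) ∣ (U - V) - (4*(n:ℤ) - (e.2 - e.1)) := by
      obtain ⟨k, hk⟩ := hdvd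
      exact ⟨-k - 1, by linear_combination -hk⟩
    have h0 : (U - V) - (4*(n:ℤ) - (e.2 - e.1)) = 0 :=
      dvd_bounded hpos hdvd2 (by omega) (by omega)
    rcases lt_or_eq_of_le hl with hl2 | hl2
    · -- length < 2n : wrapped lift
      rw [if_neg (by omega)]
      have heq : ((max U V - 4*(n:ℤ), min U V) : Edge) = shift e (U - 4*(n:ℤ) - e.1) := by
        unfold shift; rw [Prod.mk.injEq]; constructor <;> omega
      rw [heq]
      exact orbit_mem hper he _ ⟨-(4*k1) - 4, by linear_combination -hk1⟩
    · -- length = 2n : short lift still exists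
      rw [if_pos (by omega)]
      have heq : ((min U V, max U V) : Edge) = shift e (V - e.1) := by
        unfold shift; rw [Prod.mk.injEq]; constructor <;> omega
      rw [heq]
      exact orbit_mem hper he _ ⟨-(4*k2) + 2, by linear_combination -hk2 + hl2⟩

set_option maxHeartbeats 2000000 in
/-- An `n`-periodic set `Ē` of edges on `ℤ`, each of length at
most `2n`, contains a 3-crossing if and only if `φ(Ē)` contains a 3-crossing
on the `4n`-gon. -/
theorem three_crossing_iff_phi (n : ℕ) (hn : 1 ≤ n)
    (E : Set Edge) (hval : ValidEdges E) (hper : Periodic n E)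
    (hlen : ∀ e ∈ E, e.2 - e.1 ≤ 2 * (n : ℤ)) :
    (∃ S : Finset Edge, ↑S ⊆ E ∧ IsCrossing 3 S) ↔
    (∃ S : Finset (Sym2 (ZMod (4 * n))), ↑S ⊆ phi n E ∧ PolyIsCrossing 3 S) := by
  constructor
  · -- forward
    rintro ⟨S, hSE, hcard, hcr⟩
    obtain ⟨f1, f2, f3, n12, n13, n23, rfl⟩ := Finset.card_eq_three.mp hcard
    have m1 : f1 ∈ E := hSE (by simp)
    have m2 : f2 ∈ E := hSE (by simp)
    have m3 : f3 ∈ E := hSE (by simp)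
    have c12 := hcr f1 (by simp) f2 (by simp) n12
    have c13 := hcr f1 (by simp) f3 (by simp) n13
    have c23 := hcr f2 (by simp) f3 (by simp) n23
    have hv1 := hval f1 m1
    have hv2 := hval f2 m2
    have hv3 := hval f3 m3
    have hl1 := hlen f1 m1
    have hl2 := hlen f2 m2
    have hl3 := hlen f3 m3
    have D12 : (f1.1 < f2.1 ∧ f2.1 < f1.2 ∧ f1.2 < f2.2) ∨
        (f2.1 < f1.1 ∧ f1.1 < f2.2 ∧ f2.2 < f1.2) := by unfold Crosses at c12; omega
    have D13 : (f1.1 < f3.1 ∧ f3.1 < f1.2 ∧ f1.2 < f3.2) ∨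
        (f3.1 < f1.1 ∧ f1.1 < f3.2 ∧ f3.2 < f1.2) := by unfold Crosses at c13; omega
    have D23 : (f2.1 < f3.1 ∧ f3.1 < f2.2 ∧ f2.2 < f3.2) ∨
        (f3.1 < f2.1 ∧ f2.1 < f3.2 ∧ f3.2 < f2.2) := by unfold Crosses at c23; omega
    rcases lt_trichotomy f1.1 f2.1 with o12 | o12 | o12
    · rcases lt_trichotomy f2.1 f3.1 with o23 | o23 | o23
      · exact fcore n hn E hper f1 f2 f3 m1 m2 m3 (by omega) (by omega) (by omega)
          (by omega) (by omega) hl1 hl3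
      · exact absurd (by omega : f2.1 = f3.1) (by omega)
      · rcases lt_trichotomy f1.1 f3.1 with o13 | o13 | o13
        · exact fcore n hn E hper f1 f3 f2 m1 m3 m2 (by omega) (by omega) (by omega)
            (by omega) (by omega) hl1 hl2
        · exact absurd (by omega : f1.1 = f3.1) (by omega)
        · exact fcore n hn E hper f3 f1 f2 m3 m1 m2 (by omega) (by omega) (by omega)
            (by omega) (by omega) hl3 hl2
    · exact absurd (by omega : f1.1 = f2.1) (by omega)
    · rcases lt_trichotomy f1.1 f3.1 with o13 | o13 | o13
      · exact fcore n hn E hper f2 f1 f3 m2 m1 m3 (by omega) (by omega) (by omega)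
          (by omega) (by omega) hl2 hl3
      · exact absurd (by omega : f1.1 = f3.1) (by omega)
      · rcases lt_trichotomy f2.1 f3.1 with o23 | o23 | o23
        · exact fcore n hn E hper f2 f3 f1 m2 m3 m1 (by omega) (by omega) (by omega)
            (by omega) (by omega) hl2 hl1
        · exact absurd (by omega : f2.1 = f3.1) (by omega)
        · exact fcore n hn E hper f3 f2 f1 m3 m2 m1 (by omega) (by omega) (by omega)
            (by omega) (by omega) hl3 hl1
  · -- backward
    rintro ⟨S, hSphi, hcard, hcr⟩
    have hn' : (1:ℤ) ≤ (n:ℤ) := by exact_mod_cast hn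
    obtain ⟨p1, p2, p3, n12, n13, n23, rfl⟩ := Finset.card_eq_three.mp hcard
    obtain ⟨e1, he1, hp1⟩ := hSphi (by simp : p1 ∈ ({p1, p2, p3} : Finset _))
    obtain ⟨e2, he2, hp2⟩ := hSphi (by simp : p2 ∈ ({p1, p2, p3} : Finset _))
    obtain ⟨e3, he3, hp3⟩ := hSphi (by simp : p3 ∈ ({p1, p2, p3} : Finset _))
    subst hp1; subst hp2; subst hp3
    have c12 := polyCrosses_elim (hcr _ (by simp) _ (by simp) n12)
    have c13 := polyCrosses_elim (hcr _ (by simp) _ (by simp) n13)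
    have c23 := polyCrosses_elim (hcr _ (by simp) _ (by simp) n23)
    obtain ⟨hU10, hU11, -⟩ := val_intCast_facts n hn e1.1
    obtain ⟨hV10, hV11, -⟩ := val_intCast_facts n hn e1.2
    obtain ⟨hU20, hU21, -⟩ := val_intCast_facts n hn e2.1
    obtain ⟨hV20, hV21, -⟩ := val_intCast_facts n hn e2.2
    obtain ⟨hU30, hU31, -⟩ := val_intCast_facts n hn e3.1
    obtain ⟨hV30, hV31, -⟩ := val_intCast_facts n hn e3.2
    set U1 : ℤ := ((e1.1 : ZMod (4*n)).val : ℤ)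
    set V1 : ℤ := ((e1.2 : ZMod (4*n)).val : ℤ)
    set U2 : ℤ := ((e2.1 : ZMod (4*n)).val : ℤ)
    set V2 : ℤ := ((e2.2 : ZMod (4*n)).val : ℤ)
    set U3 : ℤ := ((e3.1 : ZMod (4*n)).val : ℤ)
    set V3 : ℤ := ((e3.2 : ZMod (4*n)).val : ℤ)
    have D12 : (min U1 V1 < min U2 V2 ∧ min U2 V2 < max U1 V1 ∧ max U1 V1 < max U2 V2) ∨
        (min U2 V2 < min U1 V1 ∧ min U1 V1 < max U2 V2 ∧ max U2 V2 < max U1 V1) := by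
      unfold crossIndex at c12; omega
    have D13 : (min U1 V1 < min U3 V3 ∧ min U3 V3 < max U1 V1 ∧ max U1 V1 < max U3 V3) ∨
        (min U3 V3 < min U1 V1 ∧ min U1 V1 < max U3 V3 ∧ max U3 V3 < max U1 V1) := by
      unfold crossIndex at c13; omega
    have D23 : (min U2 V2 < min U3 V3 ∧ min U3 V3 < max U2 V2 ∧ max U2 V2 < max U3 V3) ∨
        (min U3 V3 < min U2 V2 ∧ min U2 V2 < max U3 V3 ∧ max U3 V3 < max U2 V2) := by
      unfold crossIndex at c23; omega
    have hb1 := lift_base n hn hper he1 (hval e1 he1) (hlen e1 he1)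
    have hb2 := lift_base n hn hper he2 (hval e2 he2) (hlen e2 he2)
    have hb3 := lift_base n hn hper he3 (hval e3 he3) (hlen e3 he3)
    have hc1 : ∀ d : ℤ, (n:ℤ) ∣ d → shift (if max U1 V1 - min U1 V1 ≤ 2*(n:ℤ)
        then ((min U1 V1, max U1 V1) : Edge) else (max U1 V1 - 4*(n:ℤ), min U1 V1)) d ∈ E :=
      fun d hd => orbit_mem hper hb1 d hd
    have hc2 : ∀ d : ℤ, (n:ℤ) ∣ d → shift (if max U2 V2 - min U2 V2 ≤ 2*(n:ℤ)
        then ((min U2 V2, max U2 V2) : Edge) else (max U2 V2 - 4*(n:ℤ), min U2 V2)) d ∈ E :=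
      fun d hd => orbit_mem hper hb2 d hd
    have hc3 : ∀ d : ℤ, (n:ℤ) ∣ d → shift (if max U3 V3 - min U3 V3 ≤ 2*(n:ℤ)
        then ((min U3 V3, max U3 V3) : Edge) else (max U3 V3 - 4*(n:ℤ), min U3 V3)) d ∈ E :=
      fun d hd => orbit_mem hper hb3 d hd
    rcases lt_trichotomy (min U1 V1) (min U2 V2) with o12 | o12 | o12
    · rcases lt_trichotomy (min U2 V2) (min U3 V3) with o23 | o23 | o23
      · exact bcore n hn E _ _ _ _ _ _ hc1 hc2 hc3 (by omega) (by omega) (by omega)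
          (by omega) (by omega) (by omega) (by omega)
      · exact absurd (by omega : min U2 V2 = min U3 V3) (by omega)
      · rcases lt_trichotomy (min U1 V1) (min U3 V3) with o13 | o13 | o13
        · exact bcore n hn E _ _ _ _ _ _ hc1 hc3 hc2 (by omega) (by omega) (by omega)
            (by omega) (by omega) (by omega) (by omega)
        · exact absurd (by omega : min U1 V1 = min U3 V3) (by omega)
        · exact bcore n hn E _ _ _ _ _ _ hc3 hc1 hc2 (by omega) (by omega) (by omega)
            (by omega) (by omega) (by omega) (by omega)
    · exact absurd (by omega : min U1 V1 = min U2 V2) (by omega)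
    · rcases lt_trichotomy (min U1 V1) (min U3 V3) with o13 | o13 | o13
      · exact bcore n hn E _ _ _ _ _ _ hc2 hc1 hc3 (by omega) (by omega) (by omega)
          (by omega) (by omega) (by omega) (by omega)
      · exact absurd (by omega : min U1 V1 = min U3 V3) (by omega)
      · rcases lt_trichotomy (min U2 V2) (min U3 V3) with o23 | o23 | o23
        · exact bcore n hn E _ _ _ _ _ _ hc2 hc3 hc1 (by omega) (by omega) (by omega)
            (by omega) (by omega) (by omega) (by omega)
        · exact absurd (by omega : min U2 V2 = min U3 V3) (by omega)
        · exact bcore n hn E _ _ _ _ _ _ hc3 hc2 hc1 (by omega) (by omega) (by omega)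
            (by omega) (by omega) (by omega) (by omega)


end Multitriangulation
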